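/- arXiv:1405.2779 — 6 statements merged into one kernel-verified Lean document; each statement's English description precedes it below -/
import Mathlib

section
/- If K is a convex closed set in ℝ^d containing the unit ball B, then for every t > 0 the Hausdorff distance between K* and (K + tB)* is at most t. -/
open Pointwise Metric
open scoped RealInnerProductSpace

noncomputable section

/-- The polar of a set `K` in Euclidean space. -/
def polarSet {d : ℕ} (K : Set (EuclideanSpace ℝ (Fin d))) : Set (EuclideanSpace ℝ (Fin d)) :=
  {u | ∀ x ∈ K, ⟪u, x⟫ ≤ (1 : ℝ)}

lemma norm_le_one_of_mem_polar {d : ℕ} {K : Set (EuclideanSpace ℝ (Fin d))}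
    (hB : closedBall (0 : EuclideanSpace ℝ (Fin d)) 1 ⊆ K) {u : EuclideanSpace ℝ (Fin d)}
    (hu : u ∈ polarSet K) : ‖u‖ ≤ 1 := by
  by_contra h
  push_neg at h
  have hu0 : u ≠ 0 := by
    intro h0; rw [h0, norm_zero] at h; linarith
  have hy : (‖u‖⁻¹ • u) ∈ closedBall (0 : EuclideanSpace ℝ (Fin d)) 1 := by
    simp [mem_closedBall, dist_eq_norm, norm_smul, abs_of_nonneg (inv_nonneg.2 (norm_nonneg u)),
      inv_mul_cancel₀ (norm_ne_zero_iff.2 hu0)]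
  have := hu _ (hB hy)
  rw [real_inner_smul_right, real_inner_self_eq_norm_sq] at this
  have hn : (0:ℝ) < ‖u‖ := by linarith
  have : ‖u‖ ≤ 1 := by
    have h2 : ‖u‖⁻¹ * (‖u‖^2) = ‖u‖ := by field_simp
    rw [h2] at this; exact this
  linarith

/-- If `K` is a convex closed set containing the unit ball `B`, then for every `t > 0`
the Hausdorff distance between `K*` and `(K + tB)*` is at most `t`. -/
theorem hausdorffEdist_polar_add_ball_le {d : ℕ}
    (K : Set (EuclideanSpace ℝ (Fin d))) (hKcl : IsClosed K) (hKconv : Convex ℝ K)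
    (hB : closedBall (0 : EuclideanSpace ℝ (Fin d)) 1 ⊆ K) (t : ℝ) (ht : 0 < t) :
    EMetric.hausdorffEdist (polarSet K)
        (polarSet (K + t • closedBall (0 : EuclideanSpace ℝ (Fin d)) 1))
      ≤ ENNReal.ofReal t := by
  have ht1 : (0:ℝ) < 1 + t := by linarith
  apply EMetric.hausdorffEdist_le_of_mem_edist
  · intro u hu
    refine ⟨(1 + t)⁻¹ • u, ?_, ?_⟩
    · intro z hz
      obtain ⟨x, hx, b, hb, rfl⟩ := hz
      obtain ⟨y, hy, rfl⟩ := hb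
      have h1 : ⟪u, x⟫ ≤ 1 := hu x hx
      have h2 : ⟪u, y⟫ ≤ 1 := hu y (hB hy)
      rw [real_inner_smul_left, inner_add_right, real_inner_smul_right]
      rw [inv_mul_le_iff₀ ht1]
      nlinarith
    · rw [edist_le_ofReal ht.le, dist_eq_norm]
      have : u - (1 + t)⁻¹ • u = (1 - (1 + t)⁻¹) • u := by
        rw [sub_smul, one_smul]
      rw [this, norm_smul]
      have hnu : ‖u‖ ≤ 1 := norm_le_one_of_mem_polar hB hu
      have h3 : (0:ℝ) ≤ 1 - (1 + t)⁻¹ := by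
        have : (1 + t)⁻¹ ≤ 1 := by
          rw [inv_le_one_iff₀]; right; linarith
        linarith
      rw [Real.norm_eq_abs, abs_of_nonneg h3]
      have h4 : 1 - (1 + t)⁻¹ ≤ t := by
        have : (0:ℝ) < (1 + t)⁻¹ := inv_pos.2 ht1
        nlinarith [mul_inv_cancel₀ (ne_of_gt ht1)]
      nlinarith [norm_nonneg u]
  · intro u hu
    refine ⟨u, fun x hx => hu x ?_, by simp⟩
    exact ⟨x, hx, 0, ⟨0, by simp, by simp⟩, by simp⟩
end
end

section
/- For convex closed sets K, L in ℝ^d both containing the centered ball rB of radius r > 0, the Hausdorff distance between their polars satisfies ρ_H(K*, L*) ≤ r^{-2} ρ_H(K, L). -/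
open Pointwise Metric
open scoped RealInnerProductSpace

noncomputable section

lemma polar_norm_le {d : ℕ} {L : Set (EuclideanSpace ℝ (Fin d))} {r : ℝ} (hr : 0 < r)
    (hL : closedBall (0 : EuclideanSpace ℝ (Fin d)) r ⊆ L)
    {u : EuclideanSpace ℝ (Fin d)} (hu : u ∈ polarSet L) : ‖u‖ ≤ r⁻¹ := by
  rcases eq_or_ne u 0 with rfl | h0
  · simp [le_of_lt (inv_pos.2 hr)]
  · have hn : 0 < ‖u‖ := norm_pos_iff.2 h0
    have hx : (r / ‖u‖) • u ∈ closedBall (0 : EuclideanSpace ℝ (Fin d)) r := by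
      simp only [mem_closedBall, dist_zero_right, norm_smul, Real.norm_eq_abs,
        abs_of_pos (div_pos hr hn)]
      rw [div_mul_cancel₀ _ hn.ne']
    have hinner : ⟪u, (r / ‖u‖) • u⟫ = r * ‖u‖ := by
      rw [real_inner_smul_right, real_inner_self_eq_norm_sq]
      field_simp
    have h1 : r * ‖u‖ ≤ 1 := hinner ▸ hu _ (hL hx)
    rw [inv_eq_one_div, le_div_iff₀ hr]
    linarith

lemma key {d : ℕ} {K L : Set (EuclideanSpace ℝ (Fin d))} {r ε : ℝ} (hr : 0 < r) (hε : 0 < ε)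
    (hL : closedBall (0 : EuclideanSpace ℝ (Fin d)) r ⊆ L)
    (h : ∀ x ∈ K, ∃ y ∈ L, dist x y ≤ ε)
    {u : EuclideanSpace ℝ (Fin d)} (hu : u ∈ polarSet L) :
    ∃ v ∈ polarSet K, dist u v ≤ r⁻¹ ^ 2 * ε := by
  have hnu : ‖u‖ ≤ r⁻¹ := polar_norm_le hr hL hu
  have hnu0 : 0 ≤ ‖u‖ := norm_nonneg u
  set c : ℝ := 1 + ε * ‖u‖ with hc
  have hc1 : 1 ≤ c := by nlinarith
  have hc0 : 0 < c := by linarith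
  refine ⟨c⁻¹ • u, ?_, ?_⟩
  · intro x hx
    obtain ⟨y, hy, hd⟩ := h x hx
    have h1 : ⟪u, x⟫ ≤ c := by
      have h2 : ⟪u, x - y⟫ ≤ ‖u‖ * ‖x - y‖ := real_inner_le_norm u (x - y)
      have h3 : ‖x - y‖ = dist x y := (dist_eq_norm x y).symm
      have h4 : ⟪u, x⟫ = ⟪u, y⟫ + ⟪u, x - y⟫ := by rw [← inner_add_right, add_sub_cancel]
      have h5 : ⟪u, y⟫ ≤ 1 := hu y hy
      nlinarith [h3 ▸ h2, hu y hy]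
    rw [real_inner_smul_left]
    calc c⁻¹ * ⟪u, x⟫ ≤ c⁻¹ * c := by
          apply mul_le_mul_of_nonneg_left h1 (le_of_lt (inv_pos.2 hc0))
      _ = 1 := inv_mul_cancel₀ hc0.ne'
  · have : u - c⁻¹ • u = (1 - c⁻¹) • u := by rw [sub_smul, one_smul]
    rw [dist_eq_norm, this, norm_smul, Real.norm_eq_abs]
    have hci : c⁻¹ ≤ 1 := inv_le_one_of_one_le₀ hc1
    have h1c : 1 - c⁻¹ = ε * ‖u‖ / c := by field_simp; rw [hc]; ring
    rw [abs_of_nonneg (by linarith), h1c]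
    have : ε * ‖u‖ / c ≤ ε * ‖u‖ := by
      apply div_le_self (by positivity) hc1
    calc ε * ‖u‖ / c * ‖u‖ ≤ ε * ‖u‖ * ‖u‖ :=
          mul_le_mul_of_nonneg_right this hnu0
      _ ≤ ε * r⁻¹ * r⁻¹ := by
          have hri : (0:ℝ) < r⁻¹ := inv_pos.2 hr
          have hsq : ‖u‖ * ‖u‖ ≤ r⁻¹ * r⁻¹ := mul_le_mul hnu hnu hnu0 hri.le
          nlinarith
      _ = r⁻¹ ^ 2 * ε := by ring

/-- For convex closed sets `K, L ⊆ ℝ^d` both containing the centred ball of radius `r > 0`,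
`ρ_H(K*, L*) ≤ r⁻² ρ_H(K, L)`. -/
theorem hausdorffEdist_polar_le {d : ℕ}
    (K L : Set (EuclideanSpace ℝ (Fin d))) (hKcl : IsClosed K) (hKconv : Convex ℝ K)
    (hLcl : IsClosed L) (hLconv : Convex ℝ L) (r : ℝ) (hr : 0 < r)
    (hK : closedBall (0 : EuclideanSpace ℝ (Fin d)) r ⊆ K)
    (hL : closedBall (0 : EuclideanSpace ℝ (Fin d)) r ⊆ L) :
    EMetric.hausdorffEdist (polarSet K) (polarSet L)
      ≤ ENNReal.ofReal (r⁻¹ ^ 2) * EMetric.hausdorffEdist K L := by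
  have hr2 : (0:ℝ) < r⁻¹ ^ 2 := by positivity
  by_cases hH : EMetric.hausdorffEdist K L = ⊤
  · rw [hH, ENNReal.mul_top (ENNReal.ofReal_pos.2 hr2).ne']
    exact le_top
  set H := EMetric.hausdorffEdist K L with hHdef
  -- main step: for u in polar of one set, bound infEdist to polar of the other
  have main : ∀ (A B : Set (EuclideanSpace ℝ (Fin d))),
      closedBall (0 : EuclideanSpace ℝ (Fin d)) r ⊆ A →
      closedBall (0 : EuclideanSpace ℝ (Fin d)) r ⊆ B →
      EMetric.hausdorffEdist A B ≠ ⊤ →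
      ∀ u ∈ polarSet B, EMetric.infEdist u (polarSet A) ≤
        ENNReal.ofReal (r⁻¹ ^ 2) * EMetric.hausdorffEdist A B := by
    intro A B hA hB hAB u hu
    apply ENNReal.le_of_forall_pos_le_add
    intro η hη _
    set δ : ℝ := (η : ℝ) * r ^ 2 with hδ
    have hδ0 : 0 < δ := by positivity
    set ε : ℝ := (EMetric.hausdorffEdist A B).toReal + δ with hεdef
    have hε0 : 0 < ε := by
      have : 0 ≤ (EMetric.hausdorffEdist A B).toReal := ENNReal.toReal_nonneg
      linarith
    have hlt : EMetric.hausdorffEdist A B < ENNReal.ofReal ε := by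
      rw [hεdef, ENNReal.ofReal_add ENNReal.toReal_nonneg hδ0.le,
        ENNReal.ofReal_toReal hAB]
      exact ENNReal.lt_add_right hAB (ENNReal.ofReal_pos.2 hδ0).ne'
    have hnear : ∀ x ∈ A, ∃ y ∈ B, dist x y ≤ ε := by
      intro x hx
      have : EMetric.infEdist x B < ENNReal.ofReal ε :=
        lt_of_le_of_lt (EMetric.infEdist_le_hausdorffEdist_of_mem hx) hlt
      obtain ⟨y, hy, hxy⟩ := EMetric.infEdist_lt_iff.mp this
      exact ⟨y, hy, (edist_lt_ofReal.mp hxy).le⟩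
    obtain ⟨v, hv, hdv⟩ := key hr hε0 hB hnear hu
    calc EMetric.infEdist u (polarSet A) ≤ edist u v := EMetric.infEdist_le_edist_of_mem hv
      _ = ENNReal.ofReal (dist u v) := by rw [edist_dist]
      _ ≤ ENNReal.ofReal (r⁻¹ ^ 2 * ε) := ENNReal.ofReal_le_ofReal hdv
      _ = ENNReal.ofReal (r⁻¹ ^ 2) * ENNReal.ofReal ε := by
          rw [ENNReal.ofReal_mul hr2.le]
      _ = ENNReal.ofReal (r⁻¹ ^ 2) * (EMetric.hausdorffEdist A B + ENNReal.ofReal δ) := by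
          rw [hεdef, ENNReal.ofReal_add ENNReal.toReal_nonneg hδ0.le,
            ENNReal.ofReal_toReal hAB]
      _ = ENNReal.ofReal (r⁻¹ ^ 2) * EMetric.hausdorffEdist A B
            + ENNReal.ofReal (r⁻¹ ^ 2) * ENNReal.ofReal δ := by rw [mul_add]
      _ ≤ ENNReal.ofReal (r⁻¹ ^ 2) * EMetric.hausdorffEdist A B + η := by
          gcongr
          rw [← ENNReal.ofReal_mul hr2.le, hδ]
          have : r⁻¹ ^ 2 * ((η:ℝ) * r ^ 2) = (η:ℝ) := by field_simp
          rw [this, ENNReal.ofReal_coe_nnreal]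
  apply EMetric.hausdorffEdist_le_of_infEdist
  · intro u hu
    have := main L K hL hK (by rwa [show EMetric.hausdorffEdist L K = EMetric.hausdorffEdist K L from EMetric.hausdorffEdist_comm]) u hu
    rwa [show EMetric.hausdorffEdist L K = EMetric.hausdorffEdist K L from EMetric.hausdorffEdist_comm] at this
  · intro u hu
    exact main K L hK hL hH u hu
end
end

section
/- For any two convex compact sets K, L in ℝ^d containing the origin with polars K*, L*, one has ρ_H(K*, L*) ≤ max(‖K*‖, ‖L*‖)^2 · ρ_H(K, L), where ‖A‖ = sup{‖x‖ : x ∈ A}. -/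
open Pointwise Metric
open scoped RealInnerProductSpace ENNReal

noncomputable section

/-- The (possibly infinite) norm of a set: `sup {‖x‖ : x ∈ A}`. -/
def setNormE {d : ℕ} (A : Set (EuclideanSpace ℝ (Fin d))) : ℝ≥0∞ :=
  ⨆ x ∈ A, (‖x‖₊ : ℝ≥0∞)

lemma polar_approx {d : ℕ} {K L : Set (EuclideanSpace ℝ (Fin d))} {R εr : ℝ}
    (hεr : 0 ≤ εr)
    (hub : ∀ u ∈ polarSet L, ‖u‖ ≤ R)
    (hKL : ∀ x ∈ K, ∃ y ∈ L, ‖x - y‖ ≤ εr) :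
    ∀ u ∈ polarSet L, ∃ v ∈ polarSet K, ‖u - v‖ ≤ R ^ 2 * εr := by
  intro u hu
  set c : ℝ := 1 + ‖u‖ * εr with hc
  have hnu : 0 ≤ ‖u‖ := norm_nonneg u
  have hc1 : (1 : ℝ) ≤ c := by nlinarith
  have hc0 : (0 : ℝ) < c := lt_of_lt_of_le one_pos hc1
  refine ⟨c⁻¹ • u, ?_, ?_⟩
  · intro x hx
    obtain ⟨y, hy, hxy⟩ := hKL x hx
    have h1 : ⟪u, y⟫ ≤ 1 := hu y hy
    have h2 : ⟪u, x - y⟫ ≤ ‖u‖ * εr := by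
      refine le_trans (real_inner_le_norm u (x - y)) ?_
      exact mul_le_mul_of_nonneg_left hxy hnu
    have h3 : ⟪u, x⟫ ≤ c := by
      have := inner_sub_right (𝕜 := ℝ) u x y
      simp only [hc]; linarith
    show ⟪c⁻¹ • u, x⟫ ≤ 1
    rw [real_inner_smul_left]
    calc c⁻¹ * ⟪u, x⟫ ≤ c⁻¹ * c := by
          exact mul_le_mul_of_nonneg_left h3 (by positivity)
      _ = 1 := inv_mul_cancel₀ (ne_of_gt hc0)
  · have heq : u - c⁻¹ • u = (1 - c⁻¹) • u := by rw [sub_smul, one_smul]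
    rw [heq, norm_smul, Real.norm_eq_abs]
    have hinv : c⁻¹ ≤ 1 := inv_le_one_of_one_le₀ hc1
    rw [abs_of_nonneg (by linarith)]
    have h4 : 1 - c⁻¹ = ‖u‖ * εr / c := by
      field_simp
      rw [hc]; ring
    have h5 : ‖u‖ * εr / c ≤ ‖u‖ * εr := div_le_self (by positivity) hc1
    have hRu : ‖u‖ ≤ R := hub u hu
    calc (1 - c⁻¹) * ‖u‖ ≤ (‖u‖ * εr) * ‖u‖ := by
          refine mul_le_mul_of_nonneg_right ?_ hnu
          rw [h4]; exact h5
      _ ≤ R ^ 2 * εr := by nlinarith [mul_le_mul_of_nonneg_right (mul_le_mul hRu hRu hnu (hnu.trans hRu)) hεr]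
  
/-- For any two convex compact sets `K, L` containing the origin,
`ρ_H(K*, L*) ≤ max(‖K*‖, ‖L*‖)² ρ_H(K, L)`. -/
theorem hausdorffEdist_polar_le_norm_sq {d : ℕ}
    (K L : Set (EuclideanSpace ℝ (Fin d)))
    (hKconv : Convex ℝ K) (hKcomp : IsCompact K) (hK0 : (0 : EuclideanSpace ℝ (Fin d)) ∈ K)
    (hLconv : Convex ℝ L) (hLcomp : IsCompact L) (hL0 : (0 : EuclideanSpace ℝ (Fin d)) ∈ L) :
    EMetric.hausdorffEdist (polarSet K) (polarSet L)
      ≤ (max (setNormE (polarSet K)) (setNormE (polarSet L))) ^ 2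
          * EMetric.hausdorffEdist K L := by
  set ε := EMetric.hausdorffEdist K L with hε
  by_cases hε0 : ε = 0
  · have hcl : closure K = closure L :=
      EMetric.hausdorffEdist_zero_iff_closure_eq_closure.mp hε0
    rw [hKcomp.isClosed.closure_eq, hLcomp.isClosed.closure_eq] at hcl
    rw [hcl]
    simp [EMetric.hausdorffEdist, Metric.hausdorffEDist_self]
  have hεtop : ε ≠ ⊤ :=
    Metric.hausdorffEdist_ne_top_of_nonempty_of_bounded ⟨0, hK0⟩ ⟨0, hL0⟩
      hKcomp.isBounded hLcomp.isBounded
  set R := max (setNormE (polarSet K)) (setNormE (polarSet L)) with hR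
  by_cases hRtop : R = ⊤
  · rw [hRtop]
    have : (⊤ : ℝ≥0∞) ^ 2 * ε = ⊤ := by
      rw [ENNReal.top_pow (by norm_num), ENNReal.top_mul hε0]
    rw [this]; exact le_top
  set Rr := R.toReal with hRr
  set εr := ε.toReal with hεr
  have hεrn : 0 ≤ εr := ENNReal.toReal_nonneg
  have hRrn : 0 ≤ Rr := ENNReal.toReal_nonneg
  have hnrm : ∀ A : Set (EuclideanSpace ℝ (Fin d)), setNormE A ≤ R →
      ∀ u ∈ A, ‖u‖ ≤ Rr := by
    intro A hA u hu
    have h1 : (‖u‖₊ : ℝ≥0∞) ≤ R := le_trans (le_iSup₂ (f := fun x (_ : x ∈ A) => (‖x‖₊ : ℝ≥0∞)) u hu) hA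
    have := ENNReal.toReal_mono hRtop h1
    simpa using this
  have hnK : ∀ u ∈ polarSet K, ‖u‖ ≤ Rr := hnrm _ (le_max_left _ _)
  have hnL : ∀ u ∈ polarSet L, ‖u‖ ≤ Rr := hnrm _ (le_max_right _ _)
  have hclose : ∀ (A B : Set (EuclideanSpace ℝ (Fin d))), IsCompact B → B.Nonempty →
      EMetric.hausdorffEdist A B = ε → ∀ x ∈ A, ∃ y ∈ B, ‖x - y‖ ≤ εr := by
    intro A B hBc hBne hAB x hx
    obtain ⟨y, hy, hxy⟩ := hBc.exists_infEdist_eq_edist hBne x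
    refine ⟨y, hy, ?_⟩
    have h1 : edist x y ≤ ε := by
      rw [← hxy, ← hAB]
      exact EMetric.infEdist_le_hausdorffEdist_of_mem hx
    rw [← dist_eq_norm]
    have h2 : ε = ENNReal.ofReal εr := (ENNReal.ofReal_toReal hεtop).symm
    exact (edist_le_ofReal hεrn).mp (h1.trans (le_of_eq h2))
  have hKn : ∀ x ∈ K, ∃ y ∈ L, ‖x - y‖ ≤ εr := hclose K L hLcomp ⟨0, hL0⟩ hε.symm
  have hLn : ∀ x ∈ L, ∃ y ∈ K, ‖x - y‖ ≤ εr :=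
    hclose L K hKcomp ⟨0, hK0⟩ (by rw [hε]; exact Metric.hausdorffEDist_comm)
  have hmain : EMetric.hausdorffEdist (polarSet K) (polarSet L)
      ≤ ENNReal.ofReal (Rr ^ 2 * εr) := by
    apply EMetric.hausdorffEdist_le_of_mem_edist
    · intro u hu
      obtain ⟨v, hv, huv⟩ := polar_approx hεrn hnK hLn u hu
      refine ⟨v, hv, ?_⟩
      rw [edist_le_ofReal (by positivity), dist_eq_norm]
      exact huv
    · intro u hu
      obtain ⟨v, hv, huv⟩ := polar_approx hεrn hnL hKn u hu
      refine ⟨v, hv, ?_⟩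
      rw [edist_le_ofReal (by positivity), dist_eq_norm]
      exact huv
  refine le_trans hmain ?_
  rw [ENNReal.ofReal_mul (by positivity), ENNReal.ofReal_pow hRrn,
    hRr, hεr, ENNReal.ofReal_toReal hRtop]
  exact mul_le_mul_right (le_of_eq (ENNReal.ofReal_toReal hεtop)) _
end
end

section
/- Let (K, ≤, +, e) be a partially ordered abelian semigroup with e ≤ x for all x, addition compatible with order, and an order-reversing involution *. Then the n-th approximant z_n = [x_1,…,x_n] of a continued fraction is increasing in each even-indexed entry and decreasing in each odd-indexed entry; consequently the even approximants z_{2m} form an increasing sequence and the odd approximants z_{2m−1} form a decreasing sequence. -/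
/-- The continued fraction `[x₁,…,xₙ]` on a semigroup with involution `s`:
`[x] = s x` and `[x₁,…,x_{n+1}] = s (x₁ + [x₂,…,x_{n+1}])`.
(The value on the empty list is an irrelevant placeholder.) -/
def cf {K : Type*} [AddCommMonoid K] (s : K → K) : List K → K
  | [] => s 0
  | [x] => s x
  | x :: y :: l => s (x + cf s (y :: l))

lemma cf_cons {K : Type*} [AddCommMonoid K] (s : K → K) (z : K) (l : List K) (h : l ≠ []) :
    cf s (z :: l) = s (z + cf s l) := by
  cases l with
  | nil => exact absurd rfl h
  | cons y t => rfl

lemma cf_collapse {K : Type*} [AddCommMonoid K] (s : K → K) :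
    ∀ (l : List K) (a : K) (r : List K), r ≠ [] →
      cf s (l ++ a :: r) = cf s (l ++ [a + cf s r])
  | [], a, r, h => by
      simp only [List.nil_append]
      rw [cf_cons s a r h]; rfl
  | z :: t, a, r, h => by
      have h1 : t ++ a :: r ≠ [] := by simp
      have h2 : t ++ [a + cf s r] ≠ [] := by simp
      simp only [List.cons_append]
      rw [cf_cons s z _ h1, cf_cons s z _ h2, cf_collapse s t a r h]

lemma cf_key {K : Type*} [AddCommMonoid K] [PartialOrder K] (s : K → K)
    (hadd : ∀ a b c : K, a ≤ b → a + c ≤ b + c)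
    (hanti : ∀ a b : K, a ≤ b → s b ≤ s a) :
    ∀ (l₁ l₂ : List K) (x x' : K), x ≤ x' →
      (l₁.length % 2 = 1 → cf s (l₁ ++ x :: l₂) ≤ cf s (l₁ ++ x' :: l₂)) ∧
      (l₁.length % 2 = 0 → cf s (l₁ ++ x' :: l₂) ≤ cf s (l₁ ++ x :: l₂))
  | [], l₂, x, x', hxx => by
      constructor
      · intro h; simp at h
      · intro _
        simp only [List.nil_append]
        cases l₂ with
        | nil => exact hanti _ _ hxx
        | cons y t =>
            rw [cf_cons s x _ (by simp), cf_cons s x' _ (by simp)]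
            exact hanti _ _ (hadd _ _ _ hxx)
  | z :: t, l₂, x, x', hxx => by
      have ih := cf_key s hadd hanti t l₂ x x' hxx
      have h1 : t ++ x :: l₂ ≠ [] := by simp
      have h2 : t ++ x' :: l₂ ≠ [] := by simp
      simp only [List.cons_append, List.length_cons]
      rw [cf_cons s z _ h1, cf_cons s z _ h2]
      constructor
      · intro h
        have ht : t.length % 2 = 0 := by omega
        have := ih.2 ht
        exact hanti _ _ (by rw [add_comm z, add_comm z]; exact hadd _ _ _ this)
      · intro h
        have ht : t.length % 2 = 1 := by omega
        have := ih.1 ht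
        exact hanti _ _ (by rw [add_comm z, add_comm z]; exact hadd _ _ _ this)

lemma ofFn_snoc' {K : Type*} (x : ℕ → K) (n : ℕ) :
    (List.ofFn fun i : Fin (n + 1) => x i) = (List.ofFn fun i : Fin n => x i) ++ [x n] := by
  rw [List.ofFn_succ']
  simp [List.concat_eq_append]

/-- The `n`-th approximant of a continued fraction on a partially ordered abelian semigroup
with an order-reversing involution is increasing in every even-numbered entry and decreasing
in every odd-numbered entry (entries numbered from 1); consequently the even approximants
increase and the odd approximants decrease. -/
theorem cf_monotonicity {K : Type*} [AddCommMonoid K] [PartialOrder K] (s : K → K)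
    (hbot : ∀ x : K, 0 ≤ x)
    (hadd : ∀ a b c : K, a ≤ b → a + c ≤ b + c)
    (hanti : ∀ a b : K, a ≤ b → s b ≤ s a)
    (hinv : ∀ a : K, s (s a) = a)
    (habs : ∀ a : K, s 0 + a = s 0) :
    (∀ (l₁ l₂ : List K) (x x' : K), x ≤ x' →
      (l₁.length % 2 = 1 → cf s (l₁ ++ x :: l₂) ≤ cf s (l₁ ++ x' :: l₂)) ∧
      (l₁.length % 2 = 0 → cf s (l₁ ++ x' :: l₂) ≤ cf s (l₁ ++ x :: l₂))) ∧
    (∀ (x : ℕ → K) (m : ℕ), 1 ≤ m →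
      cf s (List.ofFn fun i : Fin (2 * m) => x i) ≤
        cf s (List.ofFn fun i : Fin (2 * m + 2) => x i) ∧
      cf s (List.ofFn fun i : Fin (2 * m + 1) => x i) ≤
        cf s (List.ofFn fun i : Fin (2 * m - 1) => x i)) := by
  refine ⟨cf_key s hadd hanti, ?_⟩
  intro x m hm
  obtain ⟨k, rfl⟩ : ∃ k, m = k + 1 := ⟨m - 1, by omega⟩
  have hle : ∀ a b : K, a ≤ a + b := fun a b => by
    calc a = a + 0 := (add_zero a).symm
    _ ≤ a + b := by rw [add_comm a 0, add_comm a b]; exact hadd _ _ _ (hbot b)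
  constructor
  · -- even: cf ofFn (2k+2) ≤ cf ofFn (2k+4)
    have e2 : 2 * (k + 1) = (2 * k + 1) + 1 := by ring
    rw [e2]
    rw [ofFn_snoc' x (2 * k + 1)]
    have hbig : (List.ofFn fun i : Fin ((2 * k + 1) + 1 + 2) => x i)
        = (List.ofFn fun i : Fin (2 * k + 1) => x i)
          ++ x (2 * k + 1) :: [x (2 * k + 2), x (2 * k + 3)] := by
      rw [ofFn_snoc' x (2 * k + 3), ofFn_snoc' x (2 * k + 2), ofFn_snoc' x (2 * k + 1)]
      simp
    rw [hbig, cf_collapse s (List.ofFn fun i : Fin (2 * k + 1) => x i) (x (2 * k + 1))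
      [x (2 * k + 2), x (2 * k + 3)] (by simp)]
    have := (cf_key s hadd hanti (List.ofFn fun i : Fin (2 * k + 1) => x i) []
      (x (2 * k + 1)) (x (2 * k + 1) + cf s [x (2 * k + 2), x (2 * k + 3)])
      (hle _ _)).1 (by simp only [List.length_ofFn]; omega)
    exact this
  · -- odd: cf ofFn (2k+3) ≤ cf ofFn (2k+1)
    have e3 : 2 * (k + 1) + 1 = 2 * k + 3 := by ring
    have e1 : 2 * (k + 1) - 1 = (2 * k) + 1 := by omega
    rw [e3, e1]
    rw [ofFn_snoc' x (2 * k)]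
    have hbig : (List.ofFn fun i : Fin (2 * k + 3) => x i)
        = (List.ofFn fun i : Fin (2 * k) => x i)
          ++ x (2 * k) :: [x (2 * k + 1), x (2 * k + 2)] := by
      rw [show 2 * k + 3 = (2 * k + 2) + 1 by ring, ofFn_snoc' x (2 * k + 2),
        ofFn_snoc' x (2 * k + 1), ofFn_snoc' x (2 * k)]
      simp
    rw [hbig, cf_collapse s (List.ofFn fun i : Fin (2 * k) => x i) (x (2 * k))
      [x (2 * k + 1), x (2 * k + 2)] (by simp)]
    have := (cf_key s hadd hanti (List.ofFn fun i : Fin (2 * k) => x i) []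
      (x (2 * k)) (x (2 * k) + cf s [x (2 * k + 1), x (2 * k + 2)])
      (hle _ _)).2 (by simp only [List.length_ofFn]; omega)
    exact this
end

section
/- In a partially ordered abelian semigroup K with closed order induced by a self-polar h (i.e., x ≤ y + t·h for all t > 0 implies x ≤ y), the function ρ_h(x,y) = inf{t ≥ 0 : x ≤ y + t·h and y ≤ x + t·h} is a metric on K_h = {x : x ≤ a·h for some a > 0}, and the order relation {(x,y) : x ≤ y} is closed in (K_h, ρ_h) × (K_h, ρ_h). -/
open Filter
open scoped NNReal Topology

noncomputable section

/-- The distance `ρ_h(x,y) = inf{t ≥ 0 : x ≤ y + t h, y ≤ x + t h}`. -/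
def rhoS {K : Type*} [AddCommMonoid K] [PartialOrder K] [Module ℝ≥0 K] (h : K) (x y : K) :
    ℝ≥0 :=
  sInf {t : ℝ≥0 | x ≤ y + t • h ∧ y ≤ x + t • h}

section Aux

variable {K : Type*} [AddCommMonoid K] [PartialOrder K] [Module ℝ≥0 K] (h : K)
  (hbot : ∀ x : K, 0 ≤ x)
  (hadd : ∀ a b c : K, a ≤ b → a + c ≤ b + c)

include hbot hadd

lemma rhoS_mono_aux {x y : K} {s t : ℝ≥0} (hst : s ≤ t)
    (hx : x ≤ y + s • h) : x ≤ y + t • h := by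
  have ht : t • h = s • h + (t - s) • h := by
    rw [← add_smul, add_tsub_cancel_of_le hst]
  calc x ≤ y + s • h := hx
    _ = 0 + (y + s • h) := (zero_add _).symm
    _ ≤ (t - s) • h + (y + s • h) := hadd _ _ _ (hbot _)
    _ = y + (s • h + (t - s) • h) := by abel
    _ = y + t • h := by rw [← ht]

lemma rhoS_le_helper {x y : K} {a : ℝ≥0} (hx : x ≤ a • h) : x ≤ y + a • h :=
  calc x ≤ a • h := hx
    _ = 0 + a • h := (zero_add _).symm
    _ ≤ y + a • h := hadd _ _ _ (hbot _)

lemma rhoS_nonempty {x y : K} {a b : ℝ≥0} (hx : x ≤ a • h) (hy : y ≤ b • h) :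
    (a + b) ∈ {t : ℝ≥0 | x ≤ y + t • h ∧ y ≤ x + t • h} :=
  ⟨rhoS_mono_aux h hbot hadd (le_add_right le_rfl) (rhoS_le_helper h hbot hadd hx),
   rhoS_mono_aux h hbot hadd (le_add_left le_rfl) (rhoS_le_helper h hbot hadd hy)⟩

lemma rhoS_mem_of_lt {x y : K}
    (hne : {t : ℝ≥0 | x ≤ y + t • h ∧ y ≤ x + t • h}.Nonempty)
    {t : ℝ≥0} (ht : rhoS h x y < t) : x ≤ y + t • h ∧ y ≤ x + t • h := by
  obtain ⟨s, hs, hst⟩ := exists_lt_of_csInf_lt hne ht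
  exact ⟨rhoS_mono_aux h hbot hadd hst.le hs.1, rhoS_mono_aux h hbot hadd hst.le hs.2⟩

end Aux

/-- If `x ≤ y + t h` for all `t > 0` implies `x ≤ y`, then `ρ_h` is a metric on
`K_h = {x : x ≤ a h for some a > 0}` and the order is closed with respect to it. -/
theorem rhoS_metric_and_closed_order {K : Type*} [AddCommMonoid K] [PartialOrder K]
    [Module ℝ≥0 K] (h : K)
    (hbot : ∀ x : K, 0 ≤ x)
    (hadd : ∀ a b c : K, a ≤ b → a + c ≤ b + c)
    (hsep : ∀ x y : K, (∀ t : ℝ≥0, 0 < t → x ≤ y + t • h) → x ≤ y) :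
    (∀ x ∈ {x : K | ∃ a : ℝ≥0, 0 < a ∧ x ≤ a • h},
      ∀ y ∈ {x : K | ∃ a : ℝ≥0, 0 < a ∧ x ≤ a • h}, (rhoS h x y = 0 ↔ x = y)) ∧
    (∀ x y : K, rhoS h x y = rhoS h y x) ∧
    (∀ x ∈ {x : K | ∃ a : ℝ≥0, 0 < a ∧ x ≤ a • h},
      ∀ y ∈ {x : K | ∃ a : ℝ≥0, 0 < a ∧ x ≤ a • h},
      ∀ z ∈ {x : K | ∃ a : ℝ≥0, 0 < a ∧ x ≤ a • h},
        rhoS h x z ≤ rhoS h x y + rhoS h y z) ∧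
    (∀ (xs ys : ℕ → K) (x y : K),
      (∃ a : ℝ≥0, 0 < a ∧ x ≤ a • h) → (∃ a : ℝ≥0, 0 < a ∧ y ≤ a • h) →
      (∀ n, (∃ a : ℝ≥0, 0 < a ∧ xs n ≤ a • h) ∧ (∃ a : ℝ≥0, 0 < a ∧ ys n ≤ a • h) ∧
        xs n ≤ ys n) →
      Tendsto (fun n => rhoS h (xs n) x) atTop (𝓝 0) →
      Tendsto (fun n => rhoS h (ys n) y) atTop (𝓝 0) → x ≤ y) := by
  have key : ∀ x y : K, (∃ a : ℝ≥0, 0 < a ∧ x ≤ a • h) → (∃ a : ℝ≥0, 0 < a ∧ y ≤ a • h) →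
      ∀ t : ℝ≥0, rhoS h x y < t → x ≤ y + t • h ∧ y ≤ x + t • h := by
    rintro x y ⟨a, -, hx⟩ ⟨b, -, hy⟩ t ht
    exact rhoS_mem_of_lt h hbot hadd ⟨a + b, rhoS_nonempty h hbot hadd hx hy⟩ ht
  have chain : ∀ (p q r : K) (u v : ℝ≥0), p ≤ q + u • h → q ≤ r + v • h →
      p ≤ r + (u + v) • h := by
    intro p q r u v h1 h2
    calc p ≤ q + u • h := h1
      _ ≤ (r + v • h) + u • h := hadd _ _ _ h2
      _ = r + (u + v) • h := by rw [add_smul]; abel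
  refine ⟨?_, ?_, ?_, ?_⟩
  · rintro x hx y hy
    constructor
    · intro h0
      exact le_antisymm
        (hsep x y fun t ht => (key x y hx hy t (lt_of_eq_of_lt h0 ht)).1)
        (hsep y x fun t ht => (key x y hx hy t (lt_of_eq_of_lt h0 ht)).2)
    · rintro rfl
      have h0 : (0 : ℝ≥0) ∈ {t : ℝ≥0 | x ≤ x + t • h ∧ x ≤ x + t • h} := by simp
      exact le_antisymm (csInf_le (OrderBot.bddBelow _) h0) zero_le
  · intro x y
    unfold rhoS
    congr 1
    ext t
    exact and_comm
  · rintro x hx y hy z hz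
    refine le_of_forall_pos_le_add fun ε hε => ?_
    have hε2 : (0 : ℝ≥0) < ε / 2 := by positivity
    have h1 := key x y hx hy (rhoS h x y + ε / 2) (lt_add_of_pos_right _ hε2)
    have h2 := key y z hy hz (rhoS h y z + ε / 2) (lt_add_of_pos_right _ hε2)
    have hmem : (rhoS h x y + ε / 2 + (rhoS h y z + ε / 2)) ∈
        {t : ℝ≥0 | x ≤ z + t • h ∧ z ≤ x + t • h} :=
      ⟨chain x y z _ _ h1.1 h2.1, by
        rw [show rhoS h x y + ε / 2 + (rhoS h y z + ε / 2)
            = rhoS h y z + ε / 2 + (rhoS h x y + ε / 2) by ring]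
        exact chain z y x _ _ h2.2 h1.2⟩
    calc rhoS h x z ≤ rhoS h x y + ε / 2 + (rhoS h y z + ε / 2) :=
          csInf_le (OrderBot.bddBelow _) hmem
      _ = rhoS h x y + rhoS h y z + ε := by
          rw [add_add_add_comm, add_halves]
  · rintro xs ys x y hx hy hmem hxs hys
    refine hsep x y fun t ht => ?_
    have ht2 : (0 : ℝ≥0) < t / 2 := by positivity
    obtain ⟨n, hn1, hn2⟩ :=
      ((hxs.eventually (gt_mem_nhds ht2)).and (hys.eventually (gt_mem_nhds ht2))).exists
    have e1 : x ≤ xs n + (t / 2) • h := (key (xs n) x (hmem n).1 hx _ hn1).2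
    have e2 : ys n ≤ y + (t / 2) • h := (key (ys n) y (hmem n).2.1 hy _ hn2).1
    calc x ≤ xs n + (t / 2) • h := e1
      _ ≤ ys n + (t / 2) • h := hadd _ _ _ (hmem n).2.2
      _ ≤ (y + (t / 2) • h) + (t / 2) • h := hadd _ _ _ e2
      _ = y + (t / 2 + t / 2) • h := by rw [add_smul]; abel
      _ = y + t • h := by rw [add_halves]
end
end

section
/- Let h be self-polar in a partially ordered abelian semigroup with order-reversing involution and positive scaling with (a x)* = a^{-1} x*. Suppose the Lipschitz-type condition ρ_h(x*, (x+th)*) ≤ C_R² t holds for all t > 0 whenever h ≤ x ≤ R h, with C_R nondecreasing. Then for all x, y with r h ≤ x ≤ R h and r h ≤ y ≤ R h, ρ_h(x*, y*) ≤ C_{R/r}² r^{-2} ρ_h(x, y). -/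
open scoped NNReal

noncomputable section

namespace InvLip

set_option linter.unusedSectionVars false
set_option linter.unusedVariables false

variable {K : Type*} [AddCommMonoid K] [PartialOrder K] [Module ℝ≥0 K]

lemma add_le_add' (hadd : ∀ a b c : K, a ≤ b → a + c ≤ b + c)
    {a b c d : K} (h1 : a ≤ b) (h2 : c ≤ d) : a + c ≤ b + d := by
  calc a + c ≤ b + c := hadd _ _ _ h1
    _ = c + b := add_comm _ _
    _ ≤ d + b := hadd _ _ _ h2
    _ = b + d := add_comm _ _

lemma le_add_right' (hbot : ∀ x : K, 0 ≤ x) (hadd : ∀ a b c : K, a ≤ b → a + c ≤ b + c)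
    (u d : K) : u ≤ u + d := by
  calc u = 0 + u := (zero_add u).symm
    _ ≤ d + u := hadd _ _ _ (hbot d)
    _ = u + d := add_comm _ _

lemma smul_le_smul_right (hbot : ∀ x : K, 0 ≤ x)
    (hadd : ∀ a b c : K, a ≤ b → a + c ≤ b + c)
    {a b : ℝ≥0} (hab : a ≤ b) (x : K) : a • x ≤ b • x := by
  have hb : b • x = a • x + (b - a) • x := by
    rw [← add_smul, add_tsub_cancel_of_le hab]
  rw [hb]
  exact le_add_right' hbot hadd _ _

lemma add_smul_le (hbot : ∀ x : K, 0 ≤ x) (hadd : ∀ a b c : K, a ≤ b → a + c ≤ b + c)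
    {t t' : ℝ≥0} (htt : t ≤ t') (h w : K) : w + t • h ≤ w + t' • h := by
  calc w + t • h = t • h + w := add_comm _ _
    _ ≤ t' • h + w := hadd _ _ _ (smul_le_smul_right hbot hadd htt h)
    _ = w + t' • h := add_comm _ _

lemma good_nat (hadd : ∀ a b c : K, a ≤ b → a + c ≤ b + c) (n : ℕ) :
    ∀ u v : K, u ≤ v → (n : ℝ≥0) • u ≤ (n : ℝ≥0) • v := by
  induction n with
  | zero => intro u v _; simp
  | succ n ih =>
      intro u v huv
      push_cast
      rw [add_smul, add_smul, one_smul, one_smul]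
      exact add_le_add' hadd (ih u v huv) huv

lemma good_inv (s : K → K)
    (hanti : ∀ a b : K, a ≤ b → s b ≤ s a)
    (hinv : ∀ a : K, s (s a) = a)
    (hscale : ∀ (a : ℝ≥0) (x : K), 0 < a → s (a • x) = a⁻¹ • s x)
    {a : ℝ≥0} (ha : 0 < a)
    (hg : ∀ u v : K, u ≤ v → a • u ≤ a • v) :
    ∀ u v : K, u ≤ v → a⁻¹ • u ≤ a⁻¹ • v := by
  intro u v huv
  have h1 : s v ≤ s u := hanti _ _ huv
  have h2 : a • s v ≤ a • s u := hg _ _ h1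
  have h3 : s (a • s u) ≤ s (a • s v) := hanti _ _ h2
  rwa [hscale _ _ ha, hscale _ _ ha, hinv, hinv] at h3

lemma good_rat (s : K → K)
    (hadd : ∀ a b c : K, a ≤ b → a + c ≤ b + c)
    (hanti : ∀ a b : K, a ≤ b → s b ≤ s a)
    (hinv : ∀ a : K, s (s a) = a)
    (hscale : ∀ (a : ℝ≥0) (x : K), 0 < a → s (a • x) = a⁻¹ • s x)
    {n m : ℕ} (hm : 0 < m) :
    ∀ u v : K, u ≤ v → ((n : ℝ≥0) / m) • u ≤ ((n : ℝ≥0) / m) • v := by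
  intro u v huv
  rw [div_eq_mul_inv, mul_smul, mul_smul]
  exact good_nat hadd n _ _
    (good_inv s hanti hinv hscale (by exact_mod_cast hm) (good_nat hadd m) u v huv)

lemma exists_nat_div_btwn {a b : ℝ≥0} (hab : a < b) :
    ∃ n m : ℕ, 0 < n ∧ 0 < m ∧ a < (n : ℝ≥0) / m ∧ (n : ℝ≥0) / m < b := by
  obtain ⟨q, h1, h2⟩ := exists_rat_btwn (show (a : ℝ) < (b : ℝ) from hab)
  have hq0 : (0 : ℝ) < (q : ℝ) := lt_of_le_of_lt a.coe_nonneg h1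
  have hq0' : 0 < q := by exact_mod_cast hq0
  have hnum : (0 : ℤ) < q.num := Rat.num_pos.mpr hq0'
  have hcast : (((q.num.toNat : ℝ≥0) / (q.den : ℝ≥0) : ℝ≥0) : ℝ) = (q : ℝ) := by
    rw [NNReal.coe_div, NNReal.coe_natCast, NNReal.coe_natCast, Rat.cast_def]
    congr 1
    exact_mod_cast congrArg (Int.cast : ℤ → ℝ) (Int.toNat_of_nonneg hnum.le)
  refine ⟨q.num.toNat, q.den, by omega, q.pos, ?_, ?_⟩
  · rw [← NNReal.coe_lt_coe, hcast]; exact h1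
  · rw [← NNReal.coe_lt_coe, hcast]; exact h2

lemma rho_le (h u v : K) {c : ℝ≥0}
    (H : ∀ η : ℝ≥0, 0 < η → u ≤ v + (c + η) • h ∧ v ≤ u + (c + η) • h) :
    rhoS h u v ≤ c := by
  by_contra hc
  push_neg at hc
  set ρ := rhoS h u v with hρ
  have hpos : 0 < (ρ - c) / 2 := div_pos (tsub_pos_of_lt hc) two_pos
  have hmem := H _ hpos
  have hle : ρ ≤ c + (ρ - c) / 2 :=
    csInf_le (OrderBot.bddBelow _) (Set.mem_setOf_eq ▸ ⟨hmem.1, hmem.2⟩)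
  have hlt : c + (ρ - c) / 2 < ρ := by
    have h1 : (ρ - c) / 2 < ρ - c := NNReal.half_lt_self (tsub_pos_of_lt hc).ne'
    calc c + (ρ - c) / 2 < c + (ρ - c) := add_lt_add_right h1 c
      _ = ρ := add_tsub_cancel_of_le hc.le
  exact absurd hle (not_le.mpr hlt)

lemma rho_ge (hbot : ∀ x : K, 0 ≤ x) (hadd : ∀ a b c : K, a ≤ b → a + c ≤ b + c)
    (h : K) {u v : K} {c M : ℝ≥0}
    (hu : u ≤ M • h) (hv : v ≤ M • h) (H : rhoS h u v ≤ c) :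
    ∀ η : ℝ≥0, 0 < η → u ≤ v + (c + η) • h ∧ v ≤ u + (c + η) • h := by
  intro η hη
  have hne : {t : ℝ≥0 | u ≤ v + t • h ∧ v ≤ u + t • h}.Nonempty := by
    refine ⟨M, ?_, ?_⟩
    · exact hu.trans (by simpa using hadd 0 v (M • h) (hbot v))
    · exact hv.trans (by simpa using hadd 0 u (M • h) (hbot u))
  obtain ⟨t, htmem, htlt⟩ :=
    exists_lt_of_csInf_lt hne (lt_of_le_of_lt H (lt_add_of_pos_right c hη))
  exact ⟨htmem.1.trans (add_smul_le hbot hadd htlt.le h v),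
    htmem.2.trans (add_smul_le hbot hadd htlt.le h u)⟩

lemma key_step (s : K → K) (h : K)
    (hbot : ∀ x : K, 0 ≤ x)
    (hadd : ∀ a b c : K, a ≤ b → a + c ≤ b + c)
    (hanti : ∀ a b : K, a ≤ b → s b ≤ s a)
    (hinv : ∀ a : K, s (s a) = a)
    (hself : s h = h)
    (hscale : ∀ (a : ℝ≥0) (x : K), 0 < a → s (a • x) = a⁻¹ • s x)
    (C : ℝ≥0 → ℝ≥0)
    (hcond : ∀ (S : ℝ≥0) (x : K) (t : ℝ≥0), 0 < t → h ≤ x → x ≤ S • h →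
      rhoS h (s x) (s (x + t • h)) ≤ C S ^ 2 * t)
    {a M t η₂ : ℝ≥0} (ha : 0 < a)
    (hga : ∀ u v : K, u ≤ v → a • u ≤ a • v)
    (hgai : ∀ u v : K, u ≤ v → a⁻¹ • u ≤ a⁻¹ • v)
    (ht : 0 < t) (hη₂ : 0 < η₂)
    {u v : K} (hu1 : a • h ≤ u) (huM : u ≤ M • h) (hvu : v ≤ u + t • h) :
    s u ≤ s v + (C (M / a) ^ 2 * t / a ^ 2 + η₂) • h := by
  have hane : a ≠ 0 := ha.ne'
  have hai : (0 : ℝ≥0) < a⁻¹ := by positivity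
  set γ : ℝ≥0 := C (M / a) ^ 2 * t / a ^ 2 + η₂ with hγ
  have h1 : h ≤ a⁻¹ • u := by
    have := hgai _ _ hu1
    rwa [smul_smul, inv_mul_cancel₀ hane, one_smul] at this
  have h2 : a⁻¹ • u ≤ (M / a) • h := by
    have := hgai _ _ huM
    rwa [smul_smul, mul_comm a⁻¹ M, ← div_eq_mul_inv] at this
  have h3 : a⁻¹ • u + (t / a) • h = a⁻¹ • (u + t • h) := by
    rw [smul_add, smul_smul, mul_comm a⁻¹ t, ← div_eq_mul_inv]
  have hrho := hcond (M / a) (a⁻¹ • u) (t / a) (div_pos ht ha) h1 h2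
  rw [h3, hscale _ _ hai, hscale _ _ hai, inv_inv] at hrho
  have hsu : s u ≤ a⁻¹ • h := by
    have := hanti _ _ hu1
    rwa [hscale _ _ ha, hself] at this
  have hsu2 : s (u + t • h) ≤ a⁻¹ • h := by
    have := hanti _ _ (hu1.trans (le_add_right' hbot hadd u (t • h)))
    rwa [hscale _ _ ha, hself] at this
  have hb1 : a • s u ≤ (1 : ℝ≥0) • h := by
    have := hga _ _ hsu
    rwa [smul_smul, mul_inv_cancel₀ hane] at this
  have hb2 : a • s (u + t • h) ≤ (1 : ℝ≥0) • h := by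
    have := hga _ _ hsu2
    rwa [smul_smul, mul_inv_cancel₀ hane] at this
  have hL2 := (rho_ge hbot hadd h hb1 hb2 hrho (a * η₂) (by positivity)).1
  have harith : C (M / a) ^ 2 * (t / a) + a * η₂ = a * γ := by
    rw [hγ]; field_simp
  rw [harith] at hL2
  have hL3 : a • s u ≤ a • (s (u + t • h) + γ • h) := by
    rw [smul_add, smul_smul]; exact hL2
  have hL4 := hgai _ _ hL3
  rw [smul_smul, inv_mul_cancel₀ hane, one_smul, smul_smul, inv_mul_cancel₀ hane,
    one_smul] at hL4
  exact hL4.trans (hadd _ _ _ (hanti _ _ hvu))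

end InvLip

/-- If `ρ_h(x*, (x + t h)*) ≤ C_S² t` whenever `h ≤ x ≤ S h`, with `C` nondecreasing, then
`ρ_h(x*, y*) ≤ C_{R/r}² r⁻² ρ_h(x, y)` whenever `r h ≤ x, y ≤ R h`. -/
theorem involution_lipschitz {K : Type*} [AddCommMonoid K] [PartialOrder K] [Module ℝ≥0 K]
    (s : K → K) (h : K)
    (hbot : ∀ x : K, 0 ≤ x)
    (hadd : ∀ a b c : K, a ≤ b → a + c ≤ b + c)
    (hanti : ∀ a b : K, a ≤ b → s b ≤ s a)
    (hinv : ∀ a : K, s (s a) = a)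
    (hself : s h = h)
    (hscale : ∀ (a : ℝ≥0) (x : K), 0 < a → s (a • x) = a⁻¹ • s x)
    (C : ℝ≥0 → ℝ≥0) (hC : Monotone C)
    (hcond : ∀ (S : ℝ≥0) (x : K) (t : ℝ≥0), 0 < t → h ≤ x → x ≤ S • h →
      rhoS h (s x) (s (x + t • h)) ≤ C S ^ 2 * t)
    (r R : ℝ≥0) (hr : 0 < r) (hrR : r ≤ R) (x y : K)
    (hx1 : r • h ≤ x) (hx2 : x ≤ R • h) (hy1 : r • h ≤ y) (hy2 : y ≤ R • h) :
    rhoS h (s x) (s y) ≤ C (R / r) ^ 2 * (r⁻¹) ^ 2 * rhoS h x y := by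
  rcases eq_or_ne x y with rfl | hxy
  · refine le_trans (csInf_le (OrderBot.bddBelow _) ?_) zero_le
    exact ⟨by simp, by simp⟩
  apply InvLip.rho_le
  intro η hη
  set ρ := rhoS h x y with hρ
  set B := C (R / r) ^ 2 * (r⁻¹) ^ 2 with hB
  -- a small fixed rational scale a₁ ∈ (0, r)
  obtain ⟨n₁, m₁, hn₁, hm₁, ha₁0, ha₁r⟩ := InvLip.exists_nat_div_btwn hr
  set a₁ : ℝ≥0 := (n₁ : ℝ≥0) / m₁ with ha₁def
  have hga₁ : ∀ u v : K, u ≤ v → a₁ • u ≤ a₁ • v := by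
    rw [ha₁def]; exact InvLip.good_rat s hadd hanti hinv hscale hm₁
  have hga₁i : ∀ u v : K, u ≤ v → a₁⁻¹ • u ≤ a₁⁻¹ • v :=
    InvLip.good_inv s hanti hinv hscale ha₁0 hga₁
  set K₁ := C (R / a₁) ^ 2 / a₁ ^ 2 with hK₁
  set η₂ := η / 4 with hη₂def
  have hη₂ : 0 < η₂ := div_pos hη (by norm_num)
  set η₁ := η / (4 * (B + 1)) with hη₁def
  have hη₁ : 0 < η₁ := div_pos hη (by positivity)
  set δ := η / (4 * (K₁ + 1)) with hδdef
  have hδ : 0 < δ := div_pos hη (by positivity)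
  -- quarter arithmetic
  have hquarter : ∀ c0 : ℝ≥0, (c0 + 1) * (η / (4 * (c0 + 1))) = η / 4 := by
    intro c0
    rw [← div_div, mul_comm]
    exact div_mul_cancel₀ _ (by positivity : (0:ℝ≥0) < c0 + 1).ne'
  -- choose t close to ρ
  have hSne : {t : ℝ≥0 | x ≤ y + t • h ∧ y ≤ x + t • h}.Nonempty :=
    ⟨R, hx2.trans (by simpa using hadd 0 y (R • h) (hbot y)),
      hy2.trans (by simpa using hadd 0 x (R • h) (hbot x))⟩
  obtain ⟨t, htmem, htlt⟩ :=
    exists_lt_of_csInf_lt hSne (lt_add_of_pos_right ρ hη₁)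
  have ht0 : 0 < t := by
    rcases eq_or_ne t 0 with rfl | htne
    · exfalso
      apply hxy
      exact le_antisymm (by simpa using htmem.1) (by simpa using htmem.2)
    · exact zero_lt_iff.mpr htne
  -- choose a rational scale a₂ ∈ (r, r + δ)
  obtain ⟨n₂, m₂, hn₂, hm₂, hra₂, ha₂rδ⟩ :=
    InvLip.exists_nat_div_btwn (lt_add_of_pos_right r hδ)
  set a₂ : ℝ≥0 := (n₂ : ℝ≥0) / m₂ with ha₂def
  have ha₂0 : 0 < a₂ := hr.trans hra₂
  have hga₂ : ∀ u v : K, u ≤ v → a₂ • u ≤ a₂ • v := by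
    rw [ha₂def]; exact InvLip.good_rat s hadd hanti hinv hscale hm₂
  have hga₂i : ∀ u v : K, u ≤ v → a₂⁻¹ • u ≤ a₂⁻¹ • v :=
    InvLip.good_inv s hanti hinv hscale ha₂0 hga₂
  set ε := a₂ - r with hεdef
  have hε0 : 0 < ε := tsub_pos_of_lt hra₂
  have hεδ : ε ≤ δ := tsub_le_iff_right.mpr (by rw [add_comm]; exact ha₂rδ.le)
  have ha₂eq : r + ε = a₂ := add_tsub_cancel_of_le hra₂.le
  set z := x + ε • h with hzdef
  set w := y + ε • h with hwdef
  set γ₁ := C (R / a₁) ^ 2 * ε / a₁ ^ 2 + η₂ with hγ₁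
  set γ₂ := C ((R + ε) / a₂) ^ 2 * t / a₂ ^ 2 + η₂ with hγ₂
  have ha₁hx : a₁ • h ≤ x := (InvLip.smul_le_smul_right hbot hadd ha₁r.le h).trans hx1
  have ha₁hy : a₁ • h ≤ y := (InvLip.smul_le_smul_right hbot hadd ha₁r.le h).trans hy1
  have hxz : s x ≤ s z + γ₁ • h :=
    InvLip.key_step s h hbot hadd hanti hinv hself hscale C hcond ha₁0 hga₁ hga₁i hε0 hη₂
      ha₁hx hx2 (le_of_eq hzdef)
  have hyw : s y ≤ s w + γ₁ • h :=
    InvLip.key_step s h hbot hadd hanti hinv hself hscale C hcond ha₁0 hga₁ hga₁i hε0 hη₂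
      ha₁hy hy2 (le_of_eq hwdef)
  have ha₂hz : a₂ • h ≤ z := by
    rw [← ha₂eq, add_smul, hzdef]
    exact hadd _ _ _ hx1
  have hzM : z ≤ (R + ε) • h := by
    rw [hzdef, add_smul]
    exact hadd _ _ _ hx2
  have ha₂hw : a₂ • h ≤ w := by
    rw [← ha₂eq, add_smul, hwdef]
    exact hadd _ _ _ hy1
  have hwM : w ≤ (R + ε) • h := by
    rw [hwdef, add_smul]
    exact hadd _ _ _ hy2
  have hwz : w ≤ z + t • h := by
    rw [hwdef, hzdef, add_right_comm]
    exact hadd _ _ _ htmem.2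
  have hzw' : z ≤ w + t • h := by
    rw [hwdef, hzdef, add_right_comm]
    exact hadd _ _ _ htmem.1
  have hzw : s z ≤ s w + γ₂ • h :=
    InvLip.key_step s h hbot hadd hanti hinv hself hscale C hcond ha₂0 hga₂ hga₂i ht0 hη₂
      ha₂hz hzM hwz
  have hwz2 : s w ≤ s z + γ₂ • h :=
    InvLip.key_step s h hbot hadd hanti hinv hself hscale C hcond ha₂0 hga₂ hga₂i ht0 hη₂
      ha₂hw hwM hzw'
  have hswy : s w ≤ s y :=
    hanti _ _ (by rw [hwdef]; exact InvLip.le_add_right' hbot hadd y (ε • h))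
  have hszx : s z ≤ s x :=
    hanti _ _ (by rw [hzdef]; exact InvLip.le_add_right' hbot hadd x (ε • h))
  -- bounds on γ₁ and γ₂
  have hγ₁le : γ₁ ≤ η / 4 + η / 4 := by
    have e1 : C (R / a₁) ^ 2 * ε / a₁ ^ 2 = K₁ * ε := by
      rw [hK₁, div_mul_eq_mul_div]
    have e2 : K₁ * ε ≤ (K₁ + 1) * δ :=
      mul_le_mul (le_add_right le_rfl) hεδ zero_le zero_le
    have e3 : (K₁ + 1) * δ = η / 4 := by rw [hδdef]; exact hquarter K₁
    rw [hγ₁, hη₂def]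
    exact add_le_add_left (by rw [e1]; exact e2.trans (le_of_eq e3)) _
  have hγ₂le : γ₂ ≤ B * ρ + (η / 4 + η / 4) := by
    have m1 : (R + ε) / a₂ ≤ R / r := by
      rw [div_le_div_iff₀ ha₂0 hr, ← ha₂eq, mul_add, add_mul]
      exact add_le_add_right (by rw [mul_comm ε r]; exact mul_le_mul_left hrR ε) (R * r)
    have c1 : C ((R + ε) / a₂) ^ 2 ≤ C (R / r) ^ 2 :=
      pow_le_pow_left₀ zero_le (hC m1) 2
    have c2 : t / a₂ ^ 2 ≤ t / r ^ 2 := by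
      gcongr
    have m2 : C ((R + ε) / a₂) ^ 2 * t / a₂ ^ 2 ≤ B * t := by
      calc C ((R + ε) / a₂) ^ 2 * t / a₂ ^ 2
          = C ((R + ε) / a₂) ^ 2 * (t / a₂ ^ 2) := mul_div_assoc _ _ _
        _ ≤ C (R / r) ^ 2 * (t / r ^ 2) := mul_le_mul c1 c2 zero_le zero_le
        _ = B * t := by
            rw [hB, inv_pow, div_eq_mul_inv t]
            ring
    have m3 : B * t ≤ B * ρ + η / 4 := by
      have b1 : B * η₁ ≤ η / 4 := by
        calc B * η₁ ≤ (B + 1) * η₁ := mul_le_mul_left (le_add_right le_rfl) η₁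
          _ = η / 4 := by rw [hη₁def]; exact hquarter B
      calc B * t ≤ B * (ρ + η₁) := mul_le_mul_right htlt.le B
        _ = B * ρ + B * η₁ := mul_add _ _ _
        _ ≤ B * ρ + η / 4 := add_le_add_right b1 _
    calc γ₂ = C ((R + ε) / a₂) ^ 2 * t / a₂ ^ 2 + η₂ := hγ₂
      _ ≤ B * t + η / 4 := add_le_add m2 (le_of_eq hη₂def)
      _ ≤ (B * ρ + η / 4) + η / 4 := add_le_add_left m3 _
      _ = B * ρ + (η / 4 + η / 4) := add_assoc _ _ _
  have hq4 : η / 4 + η / 4 + (η / 4 + η / 4) = η := by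
    rw [← add_div, ← add_div,
      show η + η + (η + η) = η * 4 from by ring]
    exact mul_div_cancel_right₀ η (by norm_num)
  have htot : γ₂ + γ₁ ≤ B * ρ + η := by
    calc γ₂ + γ₁ ≤ (B * ρ + (η / 4 + η / 4)) + (η / 4 + η / 4) := add_le_add hγ₂le hγ₁le
      _ = B * ρ + (η / 4 + η / 4 + (η / 4 + η / 4)) := by rw [add_assoc]
      _ = B * ρ + η := by rw [hq4]
  constructor
  · calc s x ≤ s z + γ₁ • h := hxz
      _ ≤ (s w + γ₂ • h) + γ₁ • h := hadd _ _ _ hzw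
      _ ≤ (s y + γ₂ • h) + γ₁ • h := hadd _ _ _ (hadd _ _ _ hswy)
      _ = s y + (γ₂ + γ₁) • h := by rw [add_assoc, ← add_smul]
      _ ≤ s y + (B * ρ + η) • h := InvLip.add_smul_le hbot hadd htot h (s y)
  · calc s y ≤ s w + γ₁ • h := hyw
      _ ≤ (s z + γ₂ • h) + γ₁ • h := hadd _ _ _ hwz2
      _ ≤ (s x + γ₂ • h) + γ₁ • h := hadd _ _ _ (hadd _ _ _ hszx)
      _ = s x + (γ₂ + γ₁) • h := by rw [add_assoc, ← add_smul]
      _ ≤ s x + (B * ρ + η) • h := InvLip.add_smul_le hbot hadd htot h (s x)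
end
end
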